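/- Let K be a positive integer and let p, h ∈ ℝ^K both lie in the probability simplex Δ_K (nonnegative entries summing to 1). Then Σ_{a=1}^K p_a · exp( −(1/2)·( ‖h − e_a‖₂² − ‖p − e_a‖₂² ) ) ≤ 1, where e_a is the a-th standard basis vector and ‖·‖₂ is the Euclidean norm. -/

import Mathlib

open scoped BigOperators


lemma stmt_6_key {K : ℕ} (p y : Fin K → ℝ) (hp0 : ∀ a, 0 ≤ p a) (hp1 : ∑ a, p a = 1) :
    ∑ a, p a * Real.exp (y a) ≤
      Real.exp ((∑ a, p a * y a) + (∑ a, (y a) ^ 2) / 2) := by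
  set m : ℝ := ∑ a, p a * y a with hm
  set s : ℝ := ∑ a, (y a) ^ 2 with hs
  set Z : ℝ → ℝ := fun t => ∑ a, p a * Real.exp (t * y a) with hZ
  set Z1 : ℝ → ℝ := fun t => ∑ a, p a * y a * Real.exp (t * y a) with hZ1
  set Z2 : ℝ → ℝ := fun t => ∑ a, p a * y a ^ 2 * Real.exp (t * y a) with hZ2
  have hsnn : 0 ≤ s := Finset.sum_nonneg fun a _ => sq_nonneg _
  have hZpos : ∀ t, 0 < Z t := by
    intro t
    have hex : ∃ a : Fin K, 0 < p a := by
      by_contra hc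
      push_neg at hc
      have : (∑ a, p a) ≤ 0 := Finset.sum_nonpos fun a _ => hc a
      linarith [hp1 ▸ this]
    obtain ⟨a0, ha0⟩ := hex
    exact Finset.sum_pos' (fun a _ => mul_nonneg (hp0 a) (Real.exp_pos _).le)
      ⟨a0, Finset.mem_univ a0, mul_pos ha0 (Real.exp_pos _)⟩
  have hZd : ∀ t, HasDerivAt Z (Z1 t) t := by
    intro t
    have : HasDerivAt (fun t => ∑ a, p a * Real.exp (t * y a))
        (∑ a : Fin K, p a * (Real.exp (t * y a) * y a)) t := by
      apply HasDerivAt.fun_sum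
      intro a _
      exact ((hasDerivAt_mul_const (y a)).exp).const_mul (p a)
    convert this using 1
    simp only [hZ1]
    apply Finset.sum_congr rfl
    intro a _; ring
  have hZ1d : ∀ t, HasDerivAt Z1 (Z2 t) t := by
    intro t
    have : HasDerivAt (fun t => ∑ a, p a * y a * Real.exp (t * y a))
        (∑ a : Fin K, p a * y a * (Real.exp (t * y a) * y a)) t := by
      apply HasDerivAt.fun_sum
      intro a _
      exact ((hasDerivAt_mul_const (y a)).exp).const_mul (p a * y a)
    convert this using 1
    simp only [hZ2]
    apply Finset.sum_congr rfl
    intro a _; ring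
  have hZ2le : ∀ t, Z2 t ≤ s * Z t := by
    intro t
    have h1 : ∀ a : Fin K, p a * y a ^ 2 * Real.exp (t * y a) ≤ y a ^ 2 * Z t := by
      intro a
      have hle : p a * Real.exp (t * y a) ≤ Z t :=
        Finset.single_le_sum (f := fun a => p a * Real.exp (t * y a))
          (fun i _ => mul_nonneg (hp0 i) (Real.exp_pos _).le) (Finset.mem_univ a)
      calc p a * y a ^ 2 * Real.exp (t * y a)
          = y a ^ 2 * (p a * Real.exp (t * y a)) := by ring
        _ ≤ y a ^ 2 * Z t := by
            exact mul_le_mul_of_nonneg_left hle (sq_nonneg _)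
    calc Z2 t ≤ ∑ a, y a ^ 2 * Z t := Finset.sum_le_sum fun a _ => h1 a
      _ = s * Z t := by rw [← Finset.sum_mul]
  -- Step 1: φ t = Z1 t / Z t satisfies φ t ≤ m + s * t for t ≥ 0.
  set φ : ℝ → ℝ := fun t => Z1 t / Z t with hφ
  have hφd : ∀ t, HasDerivAt φ
      ((Z2 t * Z t - Z1 t * Z1 t) / (Z t) ^ 2) t := by
    intro t
    exact (hZ1d t).div (hZd t) (ne_of_gt (hZpos t))
  have hφ'le : ∀ t, (Z2 t * Z t - Z1 t * Z1 t) / (Z t) ^ 2 ≤ s := by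
    intro t
    rw [div_le_iff₀ (pow_pos (hZpos t) 2)]
    nlinarith [mul_le_mul_of_nonneg_right (hZ2le t) (le_of_lt (hZpos t)),
      sq_nonneg (Z1 t), hZpos t]
  set u : ℝ → ℝ := fun t => m + s * t - φ t with hu
  have hud : ∀ t, HasDerivAt u
      (s - (Z2 t * Z t - Z1 t * Z1 t) / (Z t) ^ 2) t := by
    intro t
    have h1 : HasDerivAt (fun t : ℝ => m + s * t) (s) t := by
      simpa using ((hasDerivAt_id t).const_mul s).const_add m
    exact h1.sub (hφd t)
  have humono : Monotone u := by
    apply monotone_of_deriv_nonneg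
    · exact fun t => (hud t).differentiableAt
    · intro t
      rw [(hud t).deriv]
      linarith [hφ'le t]
  have hZ0 : Z 0 = 1 := by
    simp only [hZ]
    simpa using hp1
  have hZ10 : Z1 0 = m := by
    simp only [hZ1, hm]
    simp
  have hu0 : u 0 = 0 := by
    simp only [hu, hφ, hZ0, hZ10]
    simp
  have hstep1 : ∀ t, 0 ≤ t → φ t ≤ m + s * t := by
    intro t ht
    have := humono ht
    rw [hu0] at this
    simp only [hu] at this
    linarith
  -- Step 2: ψ t = m t + s t²/2 - log (Z t) is monotone on [0, ∞).
  set ψ : ℝ → ℝ := fun t => m * t + s * t ^ 2 / 2 - Real.log (Z t) with hψ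
  have hψd : ∀ t, HasDerivAt ψ (m + s * t - Z1 t / Z t) t := by
    intro t
    have h1 : HasDerivAt (fun t : ℝ => m * t + s * t ^ 2 / 2) (m + s * t) t := by
      have ha : HasDerivAt (fun t : ℝ => m * t) m t := by
        simpa using (hasDerivAt_id t).const_mul m
      have hb : HasDerivAt (fun t : ℝ => s * t ^ 2 / 2) (s * t) t := by
        have : HasDerivAt (fun x : ℝ => s * x ^ 2 / 2) (s * (((2 : ℕ) : ℝ) * t ^ (2 - 1)) / 2) t :=
          ((hasDerivAt_pow 2 t).const_mul s).div_const 2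
        convert this using 1
        ring
      exact ha.add hb
    have h2 : HasDerivAt (fun t => Real.log (Z t)) (Z1 t / Z t) t :=
      (hZd t).log (ne_of_gt (hZpos t))
    exact h1.sub h2
  have hψmono : MonotoneOn ψ (Set.Ici (0 : ℝ)) := by
    apply monotoneOn_of_deriv_nonneg (convex_Ici 0)
    · exact fun t _ => ((hψd t).differentiableAt.continuousAt).continuousWithinAt
    · intro t ht
      exact ((hψd t).differentiableAt).differentiableWithinAt
    · intro t ht
      rw [interior_Ici] at ht
      rw [(hψd t).deriv]
      have := hstep1 t (le_of_lt ht)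
      simp only [hφ] at this
      linarith
  have hψ0 : ψ 0 = 0 := by
    simp only [hψ, hZ0]
    simp
  have h01 : ψ 0 ≤ ψ 1 :=
    hψmono (Set.self_mem_Ici) (by norm_num) (by norm_num)
  rw [hψ0] at h01
  simp only [hψ] at h01
  have hlog : Real.log (Z 1) ≤ m + s / 2 := by linarith
  have hZ1e : Z 1 ≤ Real.exp (m + s / 2) := by
    rw [← Real.exp_log (hZpos 1)]
    exact Real.exp_le_exp.mpr hlog
  have : Z 1 = ∑ a, p a * Real.exp (y a) := by
    simp only [hZ]
    simp
  linarith [hZ1e, this ▸ hZ1e]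


lemma expand_aux {K : ℕ} (f : Fin K → ℝ) (a : Fin K) :
    ∑ i : Fin K, (f i - (if i = a then 1 else 0)) ^ 2
      = (∑ i : Fin K, f i ^ 2) - 2 * f a + 1 := by
  have : ∀ i : Fin K, (f i - (if i = a then 1 else 0)) ^ 2
      = f i ^ 2 - 2 * (f i * (if i = a then 1 else 0))
        + (if i = a then (1:ℝ) else 0) := by
    intro i
    by_cases hi : i = a <;> simp [hi] <;> try ring
  rw [Finset.sum_congr rfl fun i _ => this i]
  rw [Finset.sum_add_distrib, Finset.sum_sub_distrib, ← Finset.mul_sum]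
  simp [Finset.sum_ite_eq', mul_ite]

/-- **Strong 1/2-central condition for the vector squared loss (Eq. (10) in Lemma 3's proof).**
Here `e a` is the `a`-th standard basis vector, and squared Euclidean norms are written as
sums of squares. -/
theorem stmt_6 (K : ℕ) (hK : 0 < K) (p h : Fin K → ℝ)
    (hp : p ∈ stdSimplex ℝ (Fin K)) (hh : h ∈ stdSimplex ℝ (Fin K)) :
    ∑ a : Fin K, p a * Real.exp (-(1 / 2) *
        ((∑ i : Fin K, (h i - (if i = a then 1 else 0)) ^ 2) -
          ∑ i : Fin K, (p i - (if i = a then 1 else 0)) ^ 2)) ≤ 1 := by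
  obtain ⟨hp0, hp1⟩ := hp
  have key : ∑ a, p a * Real.exp ((h - p) a) ≤
      Real.exp ((∑ a, p a * (h - p) a) + (∑ a, ((h - p) a) ^ 2) / 2) :=
    stmt_6_key p (h - p) hp0 hp1
  set C : ℝ := ((∑ i : Fin K, h i ^ 2) - ∑ i : Fin K, p i ^ 2) / 2 with hC
  have hexp : ∀ a : Fin K, (-(1 / 2) *
        ((∑ i : Fin K, (h i - (if i = a then 1 else 0)) ^ 2) -
          ∑ i : Fin K, (p i - (if i = a then 1 else 0)) ^ 2))
      = (h a - p a) + (-C) := by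
    intro a
    rw [expand_aux h a, expand_aux p a, hC]
    ring
  have hgoal : ∑ a : Fin K, p a * Real.exp (-(1 / 2) *
        ((∑ i : Fin K, (h i - (if i = a then 1 else 0)) ^ 2) -
          ∑ i : Fin K, (p i - (if i = a then 1 else 0)) ^ 2))
      = (∑ a, p a * Real.exp (h a - p a)) * Real.exp (-C) := by
    rw [Finset.sum_mul]
    apply Finset.sum_congr rfl
    intro a _
    rw [hexp a, Real.exp_add]
    ring
  rw [hgoal]
  have hkey2 : (∑ a, p a * Real.exp (h a - p a)) ≤
      Real.exp ((∑ a, p a * (h a - p a)) + (∑ a, (h a - p a) ^ 2) / 2) := by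
    simpa [Pi.sub_apply] using key
  -- algebra: m + s/2 = C
  have hmC : (∑ a, p a * (h a - p a)) + (∑ a, (h a - p a) ^ 2) / 2 = C := by
    have e1 : ∑ a, p a * (h a - p a) = (∑ a, p a * h a) - ∑ a, p a ^ 2 := by
      rw [← Finset.sum_sub_distrib]
      apply Finset.sum_congr rfl
      intro a _; ring
    have e2 : ∑ a, (h a - p a) ^ 2
        = (∑ a, h a ^ 2) - 2 * (∑ a, p a * h a) + ∑ a, p a ^ 2 := by
      have hterm : ∀ a : Fin K, (h a - p a) ^ 2
          = h a ^ 2 - 2 * (p a * h a) + p a ^ 2 := fun a => by ring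
      rw [Finset.sum_congr rfl fun a _ => hterm a, Finset.sum_add_distrib,
        Finset.sum_sub_distrib, Finset.mul_sum]
    rw [e1, e2, hC]
    ring
  rw [hmC] at hkey2
  calc (∑ a, p a * Real.exp (h a - p a)) * Real.exp (-C)
      ≤ Real.exp C * Real.exp (-C) := by
        apply mul_le_mul_of_nonneg_right hkey2 (Real.exp_pos _).le
    _ = 1 := by rw [← Real.exp_add]; simp
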